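/- Let g ∈ ℝ[x,y] be a squarefree homogeneous polynomial of degree at least 2. Then the origin (0,0) is the unique point of ℝ² at which both partial derivatives ∂g/∂x and ∂g/∂y vanish; that is, the origin is the unique critical point of the polynomial function g : ℝ² → ℝ. -/

import Mathlib

open MvPolynomial

lemma eval_homog_smul {σ S : Type*} [CommRing S] {φ : MvPolynomial σ S} {n : ℕ}
    (hφ : φ.IsHomogeneous n) (r : S) (v : σ → S) :
    eval (fun i => r * v i) φ = r ^ n * eval v φ := by
  rw [eval_eq, eval_eq, Finset.mul_sum]
  refine Finset.sum_congr rfl fun m hm => ?_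
  have hdeg : ∑ i ∈ m.support, m i = n := by
    have h := hφ (mem_support_iff.mp hm)
    rw [Finsupp.weight_apply] at h
    simpa [Finsupp.sum] using h
  simp_rw [mul_pow, Finset.prod_mul_distrib, Finset.prod_pow_eq_pow_sum, hdeg]
  ring

lemma linear_dvd_core {f : MvPolynomial (Fin 2) ℝ} {n : ℕ} (hf : f.IsHomogeneous n)
    {a b : ℝ} (hb : b ≠ 0) (h0 : eval ![a, b] f = 0) :
    (C b * X 0 - C a * X 1) ∣ f := by
  set e := finSuccEquiv ℝ 1 with he
  set q : MvPolynomial (Fin 1) ℝ := C (a / b) * X 0 with hq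
  have key : ∀ p : MvPolynomial (Fin 2) ℝ,
      Polynomial.eval q (e p) = eval₂ C ![q, X 0] p := by
    intro p
    rw [he, finSuccEquiv_apply]
    have h1 : Polynomial.eval q (eval₂Hom (Polynomial.C.comp C)
        (fun i : Fin 2 => Fin.cases Polynomial.X (fun k => Polynomial.C (X k)) i) p)
        = (Polynomial.evalRingHom q) (eval₂ (Polynomial.C.comp C)
        (fun i : Fin 2 => Fin.cases Polynomial.X (fun k => Polynomial.C (X k)) i) p) := rfl
    rw [h1, eval₂_comp_left]
    have hF : (Polynomial.evalRingHom q).comp (Polynomial.C.comp (C : ℝ →+* _))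
        = (C : ℝ →+* MvPolynomial (Fin 1) ℝ) := by
      ext r; simp
    have hg : (⇑(Polynomial.evalRingHom q)) ∘
        (fun i : Fin 2 => Fin.cases Polynomial.X (fun k => Polynomial.C (X k)) i)
        = ![q, X 0] := by
      funext i
      refine Fin.cases ?_ (fun j => ?_) i
      · simp
      · have hj : j = 0 := Subsingleton.elim _ _
        subst hj
        simp only [Function.comp_apply, Fin.cases_succ]
        simp
    rw [hF, hg]
  -- Step 2 : the evaluation vanishes
  have hroot : Polynomial.eval q (e f) = 0 := by
    rw [key f, eval₂_eq_eval_map]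
    have hv : ![q, X 0] = fun i : Fin 2 => X 0 * ![C (a / b), (1 : MvPolynomial (Fin 1) ℝ)] i := by
      funext i
      fin_cases i <;> simp [hq, mul_comm]
    rw [hv, eval_homog_smul (hf.map (C : ℝ →+* MvPolynomial (Fin 1) ℝ))]
    have hev : eval ![C (a / b), (1 : MvPolynomial (Fin 1) ℝ)] (map C f)
        = C (eval ![a / b, 1] f) := by
      rw [eval_map]
      have h2 : eval ![a / b, (1 : ℝ)] f
          = eval₂ (RingHom.id ℝ) ![a / b, (1 : ℝ)] f := rfl
      have hfun : (⇑(C : ℝ →+* MvPolynomial (Fin 1) ℝ) ∘ ![a / b, (1 : ℝ)])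
          = ![C (a / b), (1 : MvPolynomial (Fin 1) ℝ)] := by
        funext i; fin_cases i <;> simp
      rw [h2, eval₂_comp_left (C : ℝ →+* MvPolynomial (Fin 1) ℝ), RingHom.comp_id, hfun]
    rw [hev]
    have hz : eval ![a / b, (1 : ℝ)] f = 0 := by
      have h3 := eval_homog_smul hf b⁻¹ ![a, b]
      rw [h0, mul_zero] at h3
      have h4 : ![a / b, (1 : ℝ)] = fun i : Fin 2 => b⁻¹ * ![a, b] i := by
        funext i
        fin_cases i <;> simp [div_eq_inv_mul, hb]
      rw [h4, h3]
    rw [hz, map_zero, mul_zero]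
  have hdvd : (Polynomial.X - Polynomial.C q) ∣ e f := Polynomial.dvd_iff_isRoot.mpr hroot
  have hu : IsUnit (Polynomial.C (C b : MvPolynomial (Fin 1) ℝ)) :=
    ((hb.isUnit.map (C : ℝ →+* MvPolynomial (Fin 1) ℝ)).map
      (Polynomial.C : MvPolynomial (Fin 1) ℝ →+* _))
  have hell : e (C b * X 0 - C a * X 1)
      = Polynomial.C (C b) * (Polynomial.X - Polynomial.C q) := by
    rw [map_sub, map_mul, map_mul]
    have hx0 : e (X 0) = Polynomial.X := finSuccEquiv_X_zero
    have hx1 : e (X 1) = Polynomial.C (X 0) := by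
      rw [show (1 : Fin 2) = Fin.succ 0 from rfl]
      exact finSuccEquiv_X_succ
    have hc : ∀ r : ℝ, e (C r) = Polynomial.C (C r) := by
      intro r; rw [he, finSuccEquiv_apply]; simp
    rw [hx0, hx1, hc, hc, mul_sub, ← Polynomial.C_mul, ← Polynomial.C_mul, hq]
    rw [← mul_assoc, ← C_mul, mul_div_cancel₀ a hb]
  have hdvd2 : e (C b * X 0 - C a * X 1) ∣ e f := by
    rw [hell]
    exact (hu.mul_left_dvd).mpr hdvd
  have := map_dvd e.symm hdvd2
  simpa using this

lemma X_mul_pderiv_monomial {σ : Type*} [DecidableEq σ] (i : σ) (m : σ →₀ ℕ) (c : ℝ) :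
    X i * pderiv i (monomial m c) = (m i) • monomial m c := by
  rw [pderiv_monomial]
  by_cases h : m i = 0
  · simp [h]
  · have hle : Finsupp.single i 1 ≤ m :=
      Finsupp.single_le_iff.mpr (Nat.one_le_iff_ne_zero.mpr h)
    rw [X, monomial_mul, one_mul, add_comm, tsub_add_cancel_of_le hle,
      smul_monomial]
    congr 1
    push_cast
    ring

lemma euler_id {φ : MvPolynomial (Fin 2) ℝ} {n : ℕ} (hφ : φ.IsHomogeneous n) :
    ∑ i : Fin 2, X i * pderiv i φ = n • φ := by
  conv_lhs => rw [← support_sum_monomial_coeff φ]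
  conv_rhs => rw [← support_sum_monomial_coeff φ]
  simp_rw [map_sum, Finset.mul_sum, Finset.smul_sum]
  rw [Finset.sum_comm]
  refine Finset.sum_congr rfl fun m hm => ?_
  simp_rw [_root_.X_mul_pderiv_monomial, ← Finset.sum_smul]
  congr 1
  have h1 : ∑ i : Fin 2, m i = ∑ i ∈ m.support, m i :=
    (Finset.sum_subset (Finset.subset_univ _)
      (fun i _ hi => Finsupp.notMem_support_iff.mp hi)).symm
  have h2 : ∑ i ∈ m.support, m i = n := by
    have h := hφ (mem_support_iff.mp hm)
    rw [Finsupp.weight_apply] at h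
    simpa [Finsupp.sum] using h
  rw [h1, h2]

lemma pderiv_isHomogeneous {φ : MvPolynomial (Fin 2) ℝ} {n : ℕ}
    (hφ : φ.IsHomogeneous n) (i : Fin 2) : (pderiv i φ).IsHomogeneous (n - 1) := by
  conv_lhs => rw [← support_sum_monomial_coeff φ]
  rw [map_sum]
  refine IsHomogeneous.sum _ _ _ fun m hm => ?_
  rw [pderiv_monomial]
  by_cases h : m i = 0
  · simp [h, isHomogeneous_zero]
  · refine isHomogeneous_monomial _ ?_
    have hle : Finsupp.single i 1 ≤ m :=
      Finsupp.single_le_iff.mpr (Nat.one_le_iff_ne_zero.mpr h)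
    have hdm : m.degree = n := by
      have h' := hφ (mem_support_iff.mp hm)
      rw [Finsupp.weight_apply] at h'
      simpa [Finsupp.degree_apply, Finsupp.sum] using h'
    have hds : (Finsupp.single i 1).degree = 1 := by
      simp [Finsupp.degree_single]
    have key : (m - Finsupp.single i 1).degree + (Finsupp.single i 1).degree = m.degree := by
      simp only [Finsupp.degree_eq_weight_one]
      rw [← map_add, tsub_add_cancel_of_le hle]
    rw [hds] at key
    omega

lemma linear_dvd {f : MvPolynomial (Fin 2) ℝ} {n : ℕ} (hf : f.IsHomogeneous n)
    {a b : ℝ} (hab : ¬(a = 0 ∧ b = 0)) (h0 : eval ![a, b] f = 0) :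
    (C b * X 0 - C a * X 1) ∣ f := by
  by_cases hb : b = 0
  · subst hb
    have ha : a ≠ 0 := fun h => hab ⟨h, rfl⟩
    set s : Equiv.Perm (Fin 2) := Equiv.swap 0 1 with hs
    have hcomp : (![(0 : ℝ), a] ∘ s) = ![a, 0] := by
      funext i
      fin_cases i <;> simp [hs]
    have h0' : eval ![(0 : ℝ), a] (rename s f) = 0 := by
      rw [eval_rename, hcomp, h0]
    have hdvd : (C a * X 0 - C (0:ℝ) * X 1) ∣ rename s f :=
      linear_dvd_core (hf.rename_isHomogeneous) ha h0'
    have hmap := map_dvd (rename s : MvPolynomial (Fin 2) ℝ →ₐ[ℝ] MvPolynomial (Fin 2) ℝ) hdvd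
    have hrr : rename s (rename s f) = f := by
      rw [rename_rename]
      have : (⇑s ∘ ⇑s) = id := by
        funext i; simp [hs, Equiv.swap_apply_self]
      rw [this, rename_id, AlgHom.id_apply]
    have hL : (rename s) (C a * X 0 - C (0:ℝ) * X 1)
        = -(C (0:ℝ) * X 0 - C a * X 1) := by
      rw [map_sub, map_mul, map_mul, rename_C, rename_C, rename_X, rename_X]
      simp [hs]
    rw [hrr, hL] at hmap
    exact (neg_dvd).mp hmap
  · exact linear_dvd_core hf hb h0

theorem origin_unique_critical_point
    (g : MvPolynomial (Fin 2) ℝ) (d : ℕ) (hd : 2 ≤ d)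
    (hne : g ≠ 0) (hg : g.IsHomogeneous d) (hsf : Squarefree g) :
    {z : ℝ × ℝ | eval ![z.1, z.2] (pderiv 0 g) = 0 ∧ eval ![z.1, z.2] (pderiv 1 g) = 0}
      = {((0 : ℝ), (0 : ℝ))} := by
  ext ⟨a, b⟩
  simp only [Set.mem_setOf_eq, Set.mem_singleton_iff, Prod.mk.injEq]
  constructor
  · rintro ⟨h0, h1⟩
    by_contra hab
    -- g vanishes at (a,b) by Euler's identity
    have hgz : eval ![a, b] g = 0 := by
      have he := congrArg (eval ![a, b]) (euler_id hg)
      rw [map_sum, Fin.sum_univ_two, nsmul_eq_mul, map_mul] at he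
      simp only [map_mul, eval_X, h0, h1, mul_zero, add_zero] at he
      have hd0 : (d : ℝ) ≠ 0 := Nat.cast_ne_zero.mpr (by omega)
      have h2 : (d : ℝ) * eval ![a, b] g = 0 := by simpa using he.symm
      exact (mul_eq_zero.mp h2).resolve_left hd0
    set ℓ : MvPolynomial (Fin 2) ℝ := C b * X 0 - C a * X 1 with hℓ
    have hdg : ℓ ∣ g := linear_dvd hg hab hgz
    have hdp0 : ℓ ∣ pderiv 0 g := linear_dvd (pderiv_isHomogeneous hg 0) hab h0
    have hdp1 : ℓ ∣ pderiv 1 g := linear_dvd (pderiv_isHomogeneous hg 1) hab h1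
    obtain ⟨h, hh⟩ := hdg
    have hpl0 : pderiv 0 ℓ = C b := by
      rw [hℓ, map_sub, pderiv_C_mul, pderiv_C_mul, pderiv_X_self,
        pderiv_X_of_ne (by decide), mul_one, mul_zero, sub_zero]
    have hpl1 : pderiv 1 ℓ = -C a := by
      rw [hℓ, map_sub, pderiv_C_mul, pderiv_C_mul, pderiv_X_self,
        pderiv_X_of_ne (by decide), mul_one, mul_zero, zero_sub]
    have hbh : ℓ ∣ C b * h := by
      have : C b * h = pderiv 0 g - ℓ * pderiv 0 h := by
        rw [hh, pderiv_mul, hpl0]; ring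
      rw [this]
      exact dvd_sub hdp0 (dvd_mul_right ℓ _)
    have hah : ℓ ∣ C a * h := by
      have : C a * h = ℓ * pderiv 1 h - pderiv 1 g := by
        rw [hh, pderiv_mul, hpl1]; ring
      rw [this]
      exact dvd_sub (dvd_mul_right ℓ _) hdp1
    have hsq : ℓ * ℓ ∣ g := by
      have hlh : ℓ ∣ h := by
        rcases not_and_or.mp hab with ha | hb
        · exact ((Ne.isUnit ha).map (C : ℝ →+* MvPolynomial (Fin 2) ℝ)).dvd_mul_left.mp hah
        · exact ((Ne.isUnit hb).map (C : ℝ →+* MvPolynomial (Fin 2) ℝ)).dvd_mul_left.mp hbh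
      rw [hh]
      exact mul_dvd_mul_left ℓ hlh
    have hu := hsf ℓ hsq
    have hu' := hu.map (eval ![a, b] : MvPolynomial (Fin 2) ℝ →+* ℝ)
    rw [hℓ] at hu'
    simp only [map_sub, map_mul, eval_C, eval_X] at hu'
    have : b * ![a, b] 0 - a * ![a, b] 1 = 0 := by simp [mul_comm]
    rw [this] at hu'
    exact not_isUnit_zero hu'
  · rintro ⟨rfl, rfl⟩
    have key : ∀ i : Fin 2, eval ![(0:ℝ), 0] (pderiv i g) = 0 := by
      intro i
      have hs := eval_homog_smul (pderiv_isHomogeneous hg i) 0 ![(0:ℝ), 0]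
      have hv : (fun j : Fin 2 => (0:ℝ) * ![(0:ℝ), 0] j) = ![(0:ℝ), 0] := by
        funext j; fin_cases j <;> simp
      rw [hv] at hs
      rw [hs, zero_pow (by omega : d - 1 ≠ 0), zero_mul]
    exact ⟨key 0, key 1⟩
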